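/- arXiv:2512.09413 — 5 statements merged into one kernel-verified Lean document; each statement's English description precedes it below -/
import Mathlib

section
/- Let v = (v₁,v₂) : [0,1] → ℝ², λ ∈ ℂ, and let y : [0,1] → M₂(ℂ) be differentiable with J·y'(x) + V(x)·y(x) = λ·y(x) for all x ∈ [0,1], y(0) = I, and y(1) invertible. Define g(x) := J₁·y(1−x)·y(1)⁻¹·J₁. Then g is differentiable on [0,1] and satisfies J·g'(x) + V₁(x)·g(x) = λ·g(x), where V₁(x) = J₁·V(1−x)·J₁ is the Zakharov–Shabat matrix of u(x) = (v₁(1−x), −v₂(1−x)); moreover g(0) = I and g(1) = J₁·y(1)⁻¹·J₁. If in addition det y(1) = 1, then g(1) = [[y(1)₂₂, y(1)₁₂],[y(1)₂₁, y(1)₁₁]]. -/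
open Set
open scoped Matrix
open scoped Matrix.Norms.L2Operator

noncomputable section

/-- The matrix `J = [[0,1],[-1,0]]` viewed as a complex matrix. -/
def Jm : Matrix (Fin 2) (Fin 2) ℂ := !![0, 1; -1, 0]

/-- The matrix `J₁ = [[1,0],[0,-1]]` viewed as a complex matrix. -/
def J1m : Matrix (Fin 2) (Fin 2) ℂ := !![1, 0; 0, -1]

/-- The Zakharov–Shabat potential matrix `V(x) = [[v₁(x), v₂(x)],[v₂(x), -v₁(x)]]`
of a vector function `v = (v₁, v₂)`, viewed as a complex matrix. -/
def ZS (v : ℝ → ℝ × ℝ) (x : ℝ) : Matrix (Fin 2) (Fin 2) ℂ :=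
  !![((v x).1 : ℂ), ((v x).2 : ℂ); ((v x).2 : ℂ), -((v x).1 : ℂ)]

lemma J1m_sq : J1m * J1m = 1 := by
  ext i j
  fin_cases i <;> fin_cases j <;>
    simp [J1m, Matrix.mul_apply, Fin.sum_univ_two, Matrix.one_apply]

lemma Jm_J1m : Jm * J1m = -(J1m * Jm) := by
  norm_num [Jm, J1m, Matrix.mul_fin_two]

/-- If `J·y' + V·y = λ·y` on `[0,1]`, `y(0) = I` and `y(1)` is invertible, then
`g(x) := J₁·y(1−x)·y(1)⁻¹·J₁` is differentiable and satisfies `J·g' + V₁·g = λ·g`,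
where `V₁(x) = J₁·V(1−x)·J₁` is the Zakharov–Shabat matrix of
`u(x) = (v₁(1−x), −v₂(1−x))`; moreover `g(0) = I` and `g(1) = J₁·y(1)⁻¹·J₁`, and if
`det y(1) = 1` then `g(1) = [[y(1)₂₂, y(1)₁₂],[y(1)₂₁, y(1)₁₁]]`. -/
theorem stmt8 (v : ℝ → ℝ × ℝ) (lam : ℂ) (y y' : ℝ → Matrix (Fin 2) (Fin 2) ℂ)
    (hderiv : ∀ x ∈ Icc (0 : ℝ) 1, HasDerivWithinAt y (y' x) (Icc 0 1) x)
    (hode : ∀ x ∈ Icc (0 : ℝ) 1, Jm * y' x + ZS v x * y x = lam • y x)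
    (hinit : y 0 = 1) (hunit : IsUnit (y 1)) :
    (∀ x ∈ Icc (0 : ℝ) 1,
      HasDerivWithinAt (fun t => J1m * y (1 - t) * (y 1)⁻¹ * J1m)
        (-(J1m * y' (1 - x) * (y 1)⁻¹ * J1m)) (Icc 0 1) x ∧
      Jm * (-(J1m * y' (1 - x) * (y 1)⁻¹ * J1m)) +
        (J1m * ZS v (1 - x) * J1m) * (J1m * y (1 - x) * (y 1)⁻¹ * J1m) =
          lam • (J1m * y (1 - x) * (y 1)⁻¹ * J1m)) ∧
    (∀ x ∈ Icc (0 : ℝ) 1,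
      J1m * ZS v (1 - x) * J1m = ZS (fun t => ((v (1 - t)).1, -(v (1 - t)).2)) x) ∧
    J1m * y (1 - 0) * (y 1)⁻¹ * J1m = 1 ∧
    J1m * y (1 - 1) * (y 1)⁻¹ * J1m = J1m * (y 1)⁻¹ * J1m ∧
    ((y 1).det = 1 →
      J1m * y (1 - 1) * (y 1)⁻¹ * J1m =
        !![y 1 1 1, y 1 0 1; y 1 1 0, y 1 0 0]) := by
  have hdet : IsUnit (y 1).det := (Matrix.isUnit_iff_isUnit_det _).mp hunit
  refine ⟨?_, ?_, ?_, ?_, ?_⟩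
  · intro x hx
    have hx' : 1 - x ∈ Icc (0 : ℝ) 1 := ⟨by linarith [hx.2], by linarith [hx.1]⟩
    have hmap : MapsTo (fun t : ℝ => 1 - t) (Icc 0 1) (Icc 0 1) := by
      intro t ht
      show 1 - t ∈ Icc (0:ℝ) 1
      exact ⟨by linarith [ht.2], by linarith [ht.1]⟩
    have h1 : HasDerivWithinAt (fun t : ℝ => 1 - t) (-1 : ℝ) (Icc 0 1) x := by
      simpa using ((hasDerivWithinAt_id x (Icc (0:ℝ) 1)).const_sub 1)
    have h2 : HasDerivWithinAt (fun t => y (1 - t)) (-(y' (1 - x))) (Icc 0 1) x := by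
      have := HasDerivWithinAt.scomp x (hderiv (1 - x) hx') h1 hmap
      simp at this
      exact this
    constructor
    · have h3 := ((h2.const_mul J1m).mul_const ((y 1)⁻¹)).mul_const J1m
      simpa [mul_neg, neg_mul, mul_assoc] using h3
    · have key := hode (1 - x) hx'
      have e1 : Jm * -(J1m * y' (1 - x) * (y 1)⁻¹ * J1m)
          = J1m * (Jm * y' (1 - x)) * (y 1)⁻¹ * J1m := by
        simp only [mul_neg, mul_assoc]
        rw [← mul_assoc Jm J1m, Jm_J1m]
        simp [mul_assoc]
      have e2 : (J1m * ZS v (1 - x) * J1m) * (J1m * y (1 - x) * (y 1)⁻¹ * J1m)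
          = J1m * (ZS v (1 - x) * y (1 - x)) * (y 1)⁻¹ * J1m := by
        simp only [mul_assoc]
        rw [show J1m * (J1m * (y (1 - x) * ((y 1)⁻¹ * J1m)))
            = y (1 - x) * ((y 1)⁻¹ * J1m) from by rw [← mul_assoc, J1m_sq, one_mul]]
      rw [e1, e2, ← add_mul, ← add_mul, ← mul_add, key]
      simp [Matrix.mul_smul, Matrix.smul_mul]
  · intro x hx
    ext i j
    fin_cases i <;> fin_cases j <;>
      simp [J1m, ZS, Matrix.mul_apply, Fin.sum_univ_two]
  · rw [show (1:ℝ) - 0 = 1 by norm_num, mul_assoc J1m,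
      Matrix.mul_nonsing_inv _ hdet, mul_one, J1m_sq]
  · rw [show (1:ℝ) - 1 = 0 by norm_num, hinit, mul_one]
  · intro hdet1
    rw [show (1:ℝ) - 1 = 0 by norm_num, hinit, mul_one]
    have hinv : (y 1)⁻¹ = !![y 1 1 1, -(y 1 0 1); -(y 1 1 0), y 1 0 0] := by
      rw [Matrix.inv_def, hdet1, Matrix.adjugate_fin_two]
      simp
    rw [hinv]
    ext i j
    fin_cases i <;> fin_cases j <;>
      simp [J1m, Matrix.mul_apply, Fin.sum_univ_two]
end
end

section
/- Let v = (v₁,v₂) : [0,1] → ℝ², λ ∈ ℂ, and let y : [0,1] → M₂(ℂ) be differentiable with J·y'(x) + V(x)·y(x) = λ·y(x) for all x ∈ [0,1]. Define f(x) := exp((π/2)x·J)·y(x). Then f satisfies J·f'(x) + (π/2)·f(x) + exp(πx·J)·V(x)·f(x) = λ·f(x) for all x ∈ [0,1], where exp(πx·J)·V(x) is the Zakharov–Shabat matrix of the rotated vector u(x) = exp(πx·J)·v(x) = (v₁(x)cos πx + v₂(x)sin πx, −v₁(x)sin πx + v₂(x)cos πx); moreover f(1) = J·y(1). -/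
open Set
open scoped Matrix
open scoped Matrix.Norms.L2Operator

noncomputable section

lemma JmJm : Jm * Jm = -1 := by
  ext i j; fin_cases i <;> fin_cases j <;>
    simp [Jm, Matrix.mul_apply, Fin.sum_univ_two]

lemma expJm (r : ℝ) : NormedSpace.exp ((r : ℂ) • Jm) =
    (Real.cos r : ℂ) • (1 : Matrix (Fin 2) (Fin 2) ℂ) + (Real.sin r : ℂ) • Jm := by
  set φ : ℂ →ₐ[ℝ] Matrix (Fin 2) (Fin 2) ℂ := Complex.liftAux Jm JmJm with hφ
  have hcont : Continuous φ := φ.toLinearMap.continuous_of_finiteDimensional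
  have h1 : (r : ℂ) • Jm = φ ((r : ℂ) * Complex.I) := by
    rw [Complex.liftAux_apply]
    simp [Algebra.algebraMap_eq_smul_one]
  rw [h1, ← NormedSpace.map_exp φ hcont,
    ← Complex.exp_eq_exp_ℂ, Complex.exp_mul_I,
    Complex.liftAux_apply]
  have hc : (Complex.cos (r : ℂ)) = (((Complex.cos (r : ℂ)).re : ℝ) : ℂ) := by
    rw [Complex.cos_ofReal_re, ← Complex.ofReal_cos]
  have hs : (Complex.sin (r : ℂ)) = (((Complex.sin (r : ℂ)).re : ℝ) : ℂ) := by
    rw [Complex.sin_ofReal_re, ← Complex.ofReal_sin]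
  rw [Complex.ofReal_cos, Complex.ofReal_sin, hc, hs, Complex.coe_smul, Complex.coe_smul]
  simp [Algebra.algebraMap_eq_smul_one]

lemma JmulE (a b : ℂ) :
    Jm * (a • (1 : Matrix (Fin 2) (Fin 2) ℂ) + b • Jm) = (-b) • 1 + a • Jm := by
  ext i j; fin_cases i <;> fin_cases j <;>
    simp [Jm, Matrix.mul_apply, Fin.sum_univ_two] <;> ring

lemma EcommJ (a b : ℂ) :
    Jm * (a • (1 : Matrix (Fin 2) (Fin 2) ℂ) + b • Jm) = (a • 1 + b • Jm) * Jm := by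
  ext i j; fin_cases i <;> fin_cases j <;>
    simp [Jm, Matrix.mul_apply, Fin.sum_univ_two] <;> ring

lemma EVE (c s p q : ℂ) (hcs : c ^ 2 + s ^ 2 = 1) :
    (c • (1 : Matrix (Fin 2) (Fin 2) ℂ) + s • Jm) * !![p, q; q, -p] * (c • 1 + s • Jm) =
      !![p, q; q, -p] := by
  ext i j
  fin_cases i <;> fin_cases j <;>
    simp [Jm, Matrix.mul_apply, Fin.sum_univ_two] <;>
      first
      | linear_combination p * hcs
      | linear_combination q * hcs
      | linear_combination (-p) * hcs

/-- If `J·y' + V·y = λ·y` on `[0,1]`, then `f(x) := exp((π/2)x·J)·y(x)` satisfies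
`J·f' + (π/2)·f + exp(πx·J)·V(x)·f = λ·f`, where `exp(πx·J)·V(x)` is the Zakharov–Shabat
matrix of the rotated vector
`u(x) = (v₁cos πx + v₂ sin πx, −v₁ sin πx + v₂ cos πx)`; moreover `f(1) = J·y(1)`. -/
theorem stmt9 (v : ℝ → ℝ × ℝ) (lam : ℂ) (y y' : ℝ → Matrix (Fin 2) (Fin 2) ℂ)
    (hderiv : ∀ x ∈ Icc (0 : ℝ) 1, HasDerivWithinAt y (y' x) (Icc 0 1) x)
    (hode : ∀ x ∈ Icc (0 : ℝ) 1, Jm * y' x + ZS v x * y x = lam • y x) :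
    (∀ x ∈ Icc (0 : ℝ) 1,
      ∃ d : Matrix (Fin 2) (Fin 2) ℂ,
        HasDerivWithinAt
          (fun t : ℝ => NormedSpace.exp ((((Real.pi / 2) * t : ℝ) : ℂ) • Jm) * y t)
          d (Icc 0 1) x ∧
        Jm * d +
          ((Real.pi / 2 : ℝ) : ℂ) •
            (NormedSpace.exp ((((Real.pi / 2) * x : ℝ) : ℂ) • Jm) * y x) +
          (NormedSpace.exp (((Real.pi * x : ℝ) : ℂ) • Jm) * ZS v x) *
            (NormedSpace.exp ((((Real.pi / 2) * x : ℝ) : ℂ) • Jm) * y x) =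
          lam • (NormedSpace.exp ((((Real.pi / 2) * x : ℝ) : ℂ) • Jm) * y x)) ∧
    (∀ x : ℝ, NormedSpace.exp (((Real.pi * x : ℝ) : ℂ) • Jm) * ZS v x =
      ZS (fun t => ((v t).1 * Real.cos (Real.pi * t) + (v t).2 * Real.sin (Real.pi * t),
          -(v t).1 * Real.sin (Real.pi * t) + (v t).2 * Real.cos (Real.pi * t))) x) ∧
    NormedSpace.exp ((((Real.pi / 2) * 1 : ℝ) : ℂ) • Jm) * y 1 = Jm * y 1 := by
  set E : ℝ → Matrix (Fin 2) (Fin 2) ℂ := fun t =>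
    (Real.cos (Real.pi / 2 * t) : ℂ) • 1 + (Real.sin (Real.pi / 2 * t) : ℂ) • Jm with hE
  have hEexp : ∀ t : ℝ, NormedSpace.exp ((((Real.pi / 2) * t : ℝ) : ℂ) • Jm) = E t :=
    fun t => expJm _
  refine ⟨?_, ?_, ?_⟩
  · intro x hx
    -- derivative of E
    have hlin : HasDerivAt (fun t : ℝ => Real.pi / 2 * t) (Real.pi / 2) x := by
      simpa using (hasDerivAt_id x).const_mul (Real.pi / 2)
    have hcosR : HasDerivAt (fun t : ℝ => Real.cos (Real.pi / 2 * t))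
        (-Real.sin (Real.pi / 2 * x) * (Real.pi / 2)) x :=
      (Real.hasDerivAt_cos _).comp x hlin
    have hsinR : HasDerivAt (fun t : ℝ => Real.sin (Real.pi / 2 * t))
        (Real.cos (Real.pi / 2 * x) * (Real.pi / 2)) x :=
      (Real.hasDerivAt_sin _).comp x hlin
    have hcosC : HasDerivAt (fun t : ℝ => ((Real.cos (Real.pi / 2 * t) : ℝ) : ℂ))
        ((-Real.sin (Real.pi / 2 * x) * (Real.pi / 2) : ℝ) : ℂ) x := hcosR.ofReal_comp
    have hsinC : HasDerivAt (fun t : ℝ => ((Real.sin (Real.pi / 2 * t) : ℝ) : ℂ))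
        ((Real.cos (Real.pi / 2 * x) * (Real.pi / 2) : ℝ) : ℂ) x := hsinR.ofReal_comp
    set E' : Matrix (Fin 2) (Fin 2) ℂ :=
      ((-Real.sin (Real.pi / 2 * x) * (Real.pi / 2) : ℝ) : ℂ) • 1 +
        ((Real.cos (Real.pi / 2 * x) * (Real.pi / 2) : ℝ) : ℂ) • Jm with hE'
    have hEd : HasDerivWithinAt E E' (Icc 0 1) x :=
      (((hcosC.smul_const (1 : Matrix (Fin 2) (Fin 2) ℂ)).add
        (hsinC.smul_const Jm)).hasDerivWithinAt)
    refine ⟨E' * y x + E x * y' x, ?_, ?_⟩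
    · have := hEd.mul (hderiv x hx)
      simp only [hEexp]; exact this
    · rw [hEexp]
      set Y := y x
      set Y' := y' x
      set V := ZS v x with hV
      -- facts
      have h1 : Jm * E' = -(((Real.pi / 2 : ℝ)) : ℂ) • E x := by
        rw [hE', JmulE, hE, smul_add, smul_smul, smul_smul]
        congr 1 <;> congr 1 <;> push_cast <;> ring
      have h2 : Jm * E x = E x * Jm := EcommJ _ _
      have hEE : NormedSpace.exp (((Real.pi * x : ℝ) : ℂ) • Jm) = E x * E x := by
        have hsplit : (((Real.pi * x : ℝ) : ℂ)) • Jm =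
            (((Real.pi / 2 * x : ℝ) : ℂ)) • Jm + (((Real.pi / 2 * x : ℝ) : ℂ)) • Jm := by
          rw [← add_smul]; push_cast; ring_nf
        rw [hsplit, Matrix.exp_add_of_commute _ _ (Commute.refl _), hEexp]
      have hcs : ((Real.cos (Real.pi / 2 * x) : ℂ)) ^ 2 +
          ((Real.sin (Real.pi / 2 * x) : ℂ)) ^ 2 = 1 := by
        exact_mod_cast Real.cos_sq_add_sin_sq (Real.pi / 2 * x)
      have hVform : V = !![(((v x).1 : ℂ)), ((v x).2 : ℂ); ((v x).2 : ℂ), -((v x).1 : ℂ)] := rfl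
      have hEVE : E x * V * E x = V := by
        rw [hVform, hE]; exact EVE _ _ _ _ hcs
      have h3 : (NormedSpace.exp (((Real.pi * x : ℝ) : ℂ) • Jm) * V) * (E x * Y) =
          E x * (V * Y) := by
        rw [hEE]
        calc (E x * E x * V) * (E x * Y) = E x * ((E x * V * E x) * Y) := by noncomm_ring
          _ = E x * (V * Y) := by rw [hEVE]
      rw [h3, mul_add, ← mul_assoc, ← mul_assoc, h1, h2, mul_assoc (E x) Jm Y']
      have hsum : E x * (Jm * Y') + E x * (V * Y) = lam • (E x * Y) := by
        rw [← mul_add, hode x hx, Matrix.mul_smul]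
      rw [Matrix.smul_mul, neg_smul, ← hsum]
      abel
  · intro x
    rw [expJm]
    ext i j
    fin_cases i <;> fin_cases j <;>
      simp [Jm, ZS, Matrix.mul_apply, Fin.sum_univ_two] <;> push_cast <;> ring
  · rw [hEexp]
    have : Real.pi / 2 * 1 = Real.pi / 2 := by ring
    rw [hE]; simp [this, Real.cos_pi_div_two, Real.sin_pi_div_two]
end
end

section
/- There exists a constant C > 0 with the following property: for every real sequence ε = (εⱼ)_{j∈ℤ} ∈ ℓ²(ℤ) and every n ∈ ℤ, the series hₙ := Σ_{j∈ℤ, j≠n} εⱼ/(j−n) converges absolutely, and the resulting sequence (hₙ)_{n∈ℤ} belongs to ℓ²(ℤ) with Σ_{n∈ℤ} hₙ² ≤ C·Σ_{j∈ℤ} εⱼ² (boundedness of the discrete Hilbert transform on ℓ²(ℤ)). -/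
noncomputable section

namespace DHT

open Filter Topology

def K : ℤ → ℝ := fun m => ((m : ℝ))⁻¹

lemma K_sq_summable : Summable (fun m : ℤ => K m ^ 2) := by
  have := (Real.summable_one_div_int_pow (p := 2)).mpr (by norm_num)
  exact this.congr fun m => by simp [K, one_div, inv_pow]

lemma K_shift_summable (n : ℤ) : Summable (fun j : ℤ => K (j - n) ^ 2) :=
  ((Equiv.subRight n).summable_iff (f := fun m : ℤ => K m ^ 2)).mpr K_sq_summable

lemma K_shift_summable_left (j : ℤ) : Summable (fun n : ℤ => K (j - n) ^ 2) :=
  ((Equiv.subLeft j).summable_iff (f := fun m : ℤ => K m ^ 2)).mpr K_sq_summable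

lemma abs_mul_le_half (a b : ℝ) : |a * b| ≤ (a ^ 2 + b ^ 2) / 2 := by
  nlinarith [sq_nonneg (|a| - |b|), abs_mul a b, sq_abs a, sq_abs b, abs_nonneg a, abs_nonneg b]

lemma prod_summable (j k : ℤ) : Summable (fun n : ℤ => K (j - n) * K (k - n)) := by
  apply Summable.of_abs
  apply Summable.of_nonneg_of_le (fun n => abs_nonneg _)
    (fun n => abs_mul_le_half (K (j - n)) (K (k - n)))
  exact ((K_shift_summable_left j).add (K_shift_summable_left k)).div_const 2

lemma prod_summable' (d : ℤ) : Summable (fun m : ℤ => K m * K (m - d)) := by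
  apply Summable.of_abs
  apply Summable.of_nonneg_of_le (fun n => abs_nonneg _)
    (fun m => abs_mul_le_half (K m) (K (m - d)))
  exact (K_sq_summable.add (K_shift_summable d)).div_const 2

lemma pointwise (d : ℤ) (hd : d ≠ 0) (m : ℤ) :
    K m * K (m - d) = (K (m - d) - K m) / d
      + (if m = 0 then 1 / (d : ℝ) ^ 2 else 0) + (if m = d then 1 / (d : ℝ) ^ 2 else 0) := by
  have hd' : (d : ℝ) ≠ 0 := Int.cast_ne_zero.mpr hd
  by_cases h0 : m = 0
  · subst h0
    rw [if_pos rfl, if_neg (Ne.symm hd)]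
    simp [K, hd']
    field_simp
    ring
  · by_cases h1 : m = d
    · subst h1
      rw [if_neg h0, if_pos rfl]
      simp [K, hd', sub_self]
      field_simp
      ring
    · have hm : (m : ℝ) ≠ 0 := Int.cast_ne_zero.mpr h0
      have hmd : ((m - d : ℤ) : ℝ) ≠ 0 := Int.cast_ne_zero.mpr (sub_ne_zero.mpr h1)
      simp only [if_neg h0, if_neg h1, add_zero, K]
      push_cast at hmd ⊢
      field_simp
      ring

lemma u_summable (d : ℤ) (hd : d ≠ 0) : Summable (fun m : ℤ => K (m - d) - K m) := by
  have hd' : (d : ℝ) ≠ 0 := Int.cast_ne_zero.mpr hd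
  have h2 : Summable (fun m : ℤ => if m = 0 then 1 / (d : ℝ) ^ 2 else 0) :=
    (hasSum_ite_eq (0 : ℤ) _).summable
  have h3 : Summable (fun m : ℤ => if m = d then 1 / (d : ℝ) ^ 2 else 0) :=
    (hasSum_ite_eq d _).summable
  have h := (((prod_summable' d).sub h2).sub h3).mul_left (d : ℝ)
  apply h.congr
  intro m
  rw [pointwise d hd m]
  field_simp
  ring

lemma boundary_zero (d : ℤ) :
    Tendsto (fun N : ℕ => ∑ m ∈ Finset.Icc (-(N : ℤ) - d) (-(N : ℤ) - 1), K m) atTop (𝓝 0) := by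
  apply squeeze_zero_norm' (a := fun N : ℕ => (d.toNat : ℝ) * (1 / ((N : ℝ) + 1)))
  · filter_upwards with N
    calc ‖∑ m ∈ Finset.Icc (-(N : ℤ) - d) (-(N : ℤ) - 1), K m‖
        ≤ ∑ m ∈ Finset.Icc (-(N : ℤ) - d) (-(N : ℤ) - 1), ‖K m‖ := norm_sum_le _ _
      _ ≤ (Finset.Icc (-(N : ℤ) - d) (-(N : ℤ) - 1)).card • (1 / ((N : ℝ) + 1)) := by
          apply Finset.sum_le_card_nsmul
          intro m hm
          simp only [Finset.mem_Icc] at hm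
          have h1 : (N : ℝ) + 1 ≤ |(m : ℝ)| := by
            rw [abs_of_neg (by exact_mod_cast (by omega : m < 0))]
            have : m ≤ -(N : ℤ) - 1 := hm.2
            have : (m : ℝ) ≤ -(N : ℝ) - 1 := by exact_mod_cast this
            linarith
          have h0 : (0 : ℝ) < (N : ℝ) + 1 := by positivity
          simp only [K, norm_inv, Real.norm_eq_abs, one_div]
          exact inv_anti₀ h0 h1
      _ ≤ (d.toNat : ℝ) * (1 / ((N : ℝ) + 1)) := by
          rw [nsmul_eq_mul, Int.card_Icc]
          have : ((-(N : ℤ) - 1 + 1 - (-(N : ℤ) - d)).toNat : ℝ) ≤ (d.toNat : ℝ) := by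
            have : (-(N : ℤ) - 1 + 1 - (-(N : ℤ) - d)).toNat ≤ d.toNat := by omega
            exact_mod_cast this
          have hpos : (0 : ℝ) ≤ 1 / ((N : ℝ) + 1) := by positivity
          exact mul_le_mul_of_nonneg_right this hpos
  · simpa using tendsto_one_div_add_atTop_nhds_zero_nat.const_mul (d.toNat : ℝ)

lemma boundary_zero' (d : ℤ) :
    Tendsto (fun N : ℕ => ∑ m ∈ Finset.Ioc ((N : ℤ) - d) (N : ℤ), K m) atTop (𝓝 0) := by
  apply squeeze_zero_norm' (a := fun N : ℕ => (d.toNat : ℝ) * ((N : ℝ) - (d : ℝ) + 1)⁻¹)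
  · filter_upwards [eventually_ge_atTop d.toNat] with N hN
    have hNd : (d : ℤ) ≤ (N : ℤ) := by omega
    calc ‖∑ m ∈ Finset.Ioc ((N : ℤ) - d) (N : ℤ), K m‖
        ≤ ∑ m ∈ Finset.Ioc ((N : ℤ) - d) (N : ℤ), ‖K m‖ := norm_sum_le _ _
      _ ≤ (Finset.Ioc ((N : ℤ) - d) (N : ℤ)).card • (((N : ℝ) - (d : ℝ) + 1)⁻¹) := by
          apply Finset.sum_le_card_nsmul
          intro m hm
          simp only [Finset.mem_Ioc] at hm
          have h1 : (N : ℝ) - (d : ℝ) + 1 ≤ |(m : ℝ)| := by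
            have hm1 : (N : ℤ) - d + 1 ≤ m := by omega
            have : ((N : ℤ) - d + 1 : ℤ) ≤ (m : ℤ) := hm1
            have hc : ((N : ℝ) - (d : ℝ) + 1) ≤ (m : ℝ) := by exact_mod_cast this
            have hmpos : (0 : ℝ) ≤ (m : ℝ) := by
              have : (0 : ℤ) ≤ m := by omega
              exact_mod_cast this
            rw [abs_of_nonneg hmpos]; exact hc
          have h0 : (0 : ℝ) < (N : ℝ) - (d : ℝ) + 1 := by
            have : ((0 : ℤ)) < (N : ℤ) - d + 1 := by omega
            have := (by exact_mod_cast this : (0 : ℝ) < (N : ℝ) - (d : ℝ) + 1)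
            exact this
          simp only [K, norm_inv, Real.norm_eq_abs]
          exact inv_anti₀ h0 h1
      _ ≤ (d.toNat : ℝ) * ((N : ℝ) - (d : ℝ) + 1)⁻¹ := by
          rw [nsmul_eq_mul, Int.card_Ioc]
          have h2 : (((N : ℤ) - ((N : ℤ) - d)).toNat : ℝ) ≤ (d.toNat : ℝ) := by
            have : ((N : ℤ) - ((N : ℤ) - d)).toNat ≤ d.toNat := by omega
            exact_mod_cast this
          have hpos : (0 : ℝ) ≤ ((N : ℝ) - (d : ℝ) + 1)⁻¹ := by
            have : ((0 : ℤ)) < (N : ℤ) - d + 1 := by omega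
            have := (by exact_mod_cast this : (0 : ℝ) < (N : ℝ) - (d : ℝ) + 1)
            positivity
          exact mul_le_mul_of_nonneg_right h2 hpos
  · have ht : Tendsto (fun N : ℕ => (N : ℝ) - (d : ℝ) + 1) atTop atTop :=
      tendsto_atTop_add_const_right _ _
        (tendsto_atTop_add_const_right _ _ tendsto_natCast_atTop_atTop)
    simpa using (ht.inv_tendsto_atTop).const_mul (d.toNat : ℝ)

lemma tsum_u_pos (d : ℤ) (hd : 0 < d) : ∑' m : ℤ, (K (m - d) - K m) = 0 := by
  have hs : Summable (fun m : ℤ => K (m - d) - K m) := u_summable d hd.ne'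
  have hmono : Monotone (fun N : ℕ => Finset.Icc (-(N : ℤ)) N) := by
    intro a b hab
    apply Finset.Icc_subset_Icc <;> simp <;> exact_mod_cast hab
  have hexh : ∀ x : ℤ, ∃ N : ℕ, x ∈ Finset.Icc (-(N : ℤ)) N := by
    intro x
    refine ⟨x.natAbs, ?_⟩
    rw [Finset.mem_Icc]
    omega
  have htend : Tendsto (fun N : ℕ => ∑ m ∈ Finset.Icc (-(N : ℤ)) N, (K (m - d) - K m)) atTop
      (𝓝 (∑' m, (K (m - d) - K m))) :=
    hs.hasSum.comp (tendsto_atTop_finset_of_monotone hmono hexh)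
  have hev : ∀ᶠ N : ℕ in atTop, ∑ m ∈ Finset.Icc (-(N : ℤ)) N, (K (m - d) - K m)
      = (∑ m ∈ Finset.Icc (-(N : ℤ) - d) (-(N : ℤ) - 1), K m)
        - ∑ m ∈ Finset.Ioc ((N : ℤ) - d) N, K m := by
    filter_upwards [eventually_ge_atTop d.toNat] with N hN
    have hNd : d ≤ (N : ℤ) := by omega
    have hshift : ∑ m ∈ Finset.Icc (-(N : ℤ)) N, K (m - d)
        = ∑ m ∈ Finset.Icc (-(N : ℤ) - d) ((N : ℤ) - d), K m := by
      rw [show (-(N:ℤ) - d) = -(N:ℤ) + (-d) by ring, show ((N:ℤ) - d) = (N:ℤ) + (-d) by ring,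
        ← Finset.map_add_right_Icc, Finset.sum_map]
      simp [addRightEmbedding, sub_eq_add_neg]
    have hsplit1 : Finset.Icc (-(N : ℤ) - d) ((N : ℤ) - d)
        = Finset.Icc (-(N : ℤ) - d) (-(N : ℤ) - 1) ∪ Finset.Icc (-(N : ℤ)) ((N : ℤ) - d) := by
      ext x; simp only [Finset.mem_Icc, Finset.mem_union]; omega
    have hsplit2 : Finset.Icc (-(N : ℤ)) (N : ℤ)
        = Finset.Icc (-(N : ℤ)) ((N : ℤ) - d) ∪ Finset.Ioc ((N : ℤ) - d) N := by
      ext x; simp only [Finset.mem_Icc, Finset.mem_union, Finset.mem_Ioc]; omega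
    have hdisj1 : Disjoint (Finset.Icc (-(N : ℤ) - d) (-(N : ℤ) - 1))
        (Finset.Icc (-(N : ℤ)) ((N : ℤ) - d)) := by
      simp only [Finset.disjoint_left, Finset.mem_Icc]; intro a ha hb; omega
    have hdisj2 : Disjoint (Finset.Icc (-(N : ℤ)) ((N : ℤ) - d))
        (Finset.Ioc ((N : ℤ) - d) N) := by
      simp only [Finset.disjoint_left, Finset.mem_Icc, Finset.mem_Ioc]; intro a ha hb; omega
    rw [Finset.sum_sub_distrib, hshift, hsplit1, Finset.sum_union hdisj1]
    rw [hsplit2, Finset.sum_union hdisj2]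
    ring
  have hlim2 : Tendsto (fun N : ℕ => ∑ m ∈ Finset.Icc (-(N : ℤ)) N, (K (m - d) - K m)) atTop
      (𝓝 0) := by
    have := (boundary_zero d).sub (boundary_zero' d)
    rw [sub_zero] at this
    exact this.congr' (hev.mono fun _ h => h.symm)
  exact tendsto_nhds_unique htend hlim2

lemma tsum_u (d : ℤ) (hd : d ≠ 0) : ∑' m : ℤ, (K (m - d) - K m) = 0 := by
  rcases hd.lt_or_gt with h | h
  · have h1 : ∑' m : ℤ, (K (m - d) - K m) = ∑' m : ℤ, (K m - K (m + d)) := by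
      rw [← (Equiv.addRight d).tsum_eq (fun m => K (m - d) - K m)]
      apply tsum_congr
      intro m
      simp [Equiv.addRight]
    rw [h1]
    have h2 : ∑' m : ℤ, (K m - K (m + d)) = -∑' m : ℤ, (K (m - (-d)) - K m) := by
      rw [← tsum_neg]
      apply tsum_congr
      intro m
      rw [sub_neg_eq_add]
      ring
    rw [h2, tsum_u_pos (-d) (by omega), neg_zero]
  · exact tsum_u_pos d h

lemma W_eq (d : ℤ) (hd : d ≠ 0) : ∑' m : ℤ, K m * K (m - d) = 2 / (d : ℝ) ^ 2 := by
  have h1 : Summable (fun m : ℤ => (K (m - d) - K m) / d) := (u_summable d hd).div_const _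
  have h2 : Summable (fun m : ℤ => if m = 0 then 1 / (d : ℝ) ^ 2 else 0) :=
    (hasSum_ite_eq (0 : ℤ) _).summable
  have h3 : Summable (fun m : ℤ => if m = d then 1 / (d : ℝ) ^ 2 else 0) :=
    (hasSum_ite_eq d _).summable
  calc ∑' m : ℤ, K m * K (m - d)
      = ∑' m : ℤ, ((K (m - d) - K m) / d
        + (if m = 0 then 1 / (d : ℝ) ^ 2 else 0) + (if m = d then 1 / (d : ℝ) ^ 2 else 0)) :=
        tsum_congr (pointwise d hd)
    _ = (∑' m : ℤ, ((K (m - d) - K m) / d + if m = 0 then 1 / (d : ℝ) ^ 2 else 0))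
        + ∑' m : ℤ, (if m = d then 1 / (d : ℝ) ^ 2 else 0) := Summable.tsum_add (h1.add h2) h3
    _ = ((∑' m : ℤ, (K (m - d) - K m) / d)
        + ∑' m : ℤ, (if m = 0 then 1 / (d : ℝ) ^ 2 else 0))
        + ∑' m : ℤ, (if m = d then 1 / (d : ℝ) ^ 2 else 0) := by rw [Summable.tsum_add h1 h2]
    _ = 2 / (d : ℝ) ^ 2 := by
        rw [tsum_div_const, tsum_u d hd, tsum_ite_eq, tsum_ite_eq, zero_div, zero_add]
        ring

def S0 : ℝ := ∑' m : ℤ, K m ^ 2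

lemma S0_nonneg : 0 ≤ S0 := tsum_nonneg fun m => sq_nonneg _

def Q : ℤ → ℝ := fun d => if d = 0 then S0 else 2 / (d : ℝ) ^ 2

lemma Q_nonneg (d : ℤ) : 0 ≤ Q d := by
  unfold Q; split
  · exact S0_nonneg
  · positivity

lemma Q_neg (d : ℤ) : Q (-d) = Q d := by
  unfold Q
  rcases eq_or_ne d 0 with h | h
  · simp [h]
  · rw [if_neg (by omega), if_neg h]
    push_cast
    rw [neg_pow]
    norm_num

lemma tsum_shift_sq (j : ℤ) : ∑' n : ℤ, K (j - n) ^ 2 = S0 :=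
  (Equiv.subLeft j).tsum_eq (fun m : ℤ => K m ^ 2)

lemma W_val (j k : ℤ) : ∑' n : ℤ, K (j - n) * K (k - n) = Q (j - k) := by
  have h : ∑' n : ℤ, K (j - n) * K (k - n) = ∑' n : ℤ, K n * K (n - (j - k)) := by
    rw [← (Equiv.subLeft j).tsum_eq (fun n : ℤ => K (j - n) * K (k - n))]
    apply tsum_congr
    intro m
    simp only [Equiv.subLeft_apply, sub_sub_cancel]
    congr 2
    ring
  rw [h]
  unfold Q
  rcases eq_or_ne (j - k) 0 with hd | hd
  · rw [if_pos hd, hd]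
    simp only [sub_zero]
    unfold S0
    exact tsum_congr fun n => (sq (K n)).symm
  · rw [if_neg hd, W_eq _ hd]

lemma row_bound (G : Finset ℤ) (j : ℤ) : ∑ k ∈ G, Q (j - k) ≤ 3 * S0 := by
  have h1 : ∀ k ∈ G, Q (j - k) ≤ (if k = j then S0 else 0) + 2 * K (j - k) ^ 2 := by
    intro k _
    rcases eq_or_ne k j with h | h
    · subst h
      simp [Q, K]
    · rw [if_neg h]
      unfold Q
      rw [if_neg (by omega)]
      rw [zero_add, K, div_eq_mul_inv, inv_pow]
  calc ∑ k ∈ G, Q (j - k) ≤ ∑ k ∈ G, ((if k = j then S0 else 0) + 2 * K (j - k) ^ 2) :=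
        Finset.sum_le_sum h1
    _ = (∑ k ∈ G, if k = j then S0 else 0) + 2 * ∑ k ∈ G, K (j - k) ^ 2 := by
        rw [Finset.sum_add_distrib, Finset.mul_sum]
    _ ≤ S0 + 2 * S0 := by
        gcongr ?_ + 2 * ?_
        · rw [Finset.sum_ite_eq' G j fun _ => S0]
          split <;> simp [S0_nonneg]
        · rw [← tsum_shift_sq j]
          exact Summable.sum_le_tsum G (fun k _ => sq_nonneg _) (K_shift_summable_left j)
    _ = 3 * S0 := by ring

lemma main_fin (G : Finset ℤ) (ε : ℤ → ℝ) (hε : ∀ j ∉ G, ε j = 0) :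
    Summable (fun n : ℤ => (∑' j : ℤ, ε j * K (j - n)) ^ 2) ∧
    ∑' n : ℤ, (∑' j : ℤ, ε j * K (j - n)) ^ 2 ≤ 3 * S0 * ∑' j : ℤ, ε j ^ 2 := by
  have h1 : ∀ n : ℤ, ∑' j : ℤ, ε j * K (j - n) = ∑ j ∈ G, ε j * K (j - n) := fun n =>
    tsum_eq_sum (fun j hj => by rw [hε j hj, zero_mul])
  have hsq : ∀ n : ℤ, (∑' j : ℤ, ε j * K (j - n)) ^ 2
      = ∑ j ∈ G, ∑ k ∈ G, (ε j * ε k) * (K (j - n) * K (k - n)) := by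
    intro n
    rw [h1, sq, Finset.sum_mul_sum]
    exact Finset.sum_congr rfl fun j _ => Finset.sum_congr rfl fun k _ => by ring
  have hterm : ∀ j k : ℤ, Summable (fun n : ℤ => (ε j * ε k) * (K (j - n) * K (k - n))) :=
    fun j k => (prod_summable j k).mul_left _
  have hsummable : Summable (fun n : ℤ => (∑' j : ℤ, ε j * K (j - n)) ^ 2) := by
    apply Summable.congr ?_ (fun n => (hsq n).symm)
    exact summable_sum fun j _ => summable_sum fun k _ => hterm j k
  refine ⟨hsummable, ?_⟩
  have h2 : ∑' n : ℤ, (∑' j : ℤ, ε j * K (j - n)) ^ 2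
      = ∑ j ∈ G, ∑ k ∈ G, (ε j * ε k) * Q (j - k) := by
    rw [tsum_congr hsq, Summable.tsum_finsetSum (fun j _ => summable_sum fun k _ => hterm j k)]
    refine Finset.sum_congr rfl fun j _ => ?_
    rw [Summable.tsum_finsetSum (fun k _ => hterm j k)]
    refine Finset.sum_congr rfl fun k _ => ?_
    rw [tsum_mul_left, W_val j k]
  rw [h2]
  have hrow' : ∀ k : ℤ, ∑ j ∈ G, Q (j - k) ≤ 3 * S0 := by
    intro k
    calc ∑ j ∈ G, Q (j - k) = ∑ j ∈ G, Q (k - j) :=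
          Finset.sum_congr rfl fun j _ => by rw [← Q_neg (k - j)]; congr 1; ring
      _ ≤ 3 * S0 := row_bound G k
  calc ∑ j ∈ G, ∑ k ∈ G, (ε j * ε k) * Q (j - k)
      ≤ ∑ j ∈ G, ∑ k ∈ G, ((ε j ^ 2 + ε k ^ 2) / 2) * Q (j - k) := by
        refine Finset.sum_le_sum fun j _ => Finset.sum_le_sum fun k _ => ?_
        exact mul_le_mul_of_nonneg_right ((le_abs_self _).trans (abs_mul_le_half _ _))
          (Q_nonneg _)
    _ = (∑ j ∈ G, (ε j ^ 2 / 2) * ∑ k ∈ G, Q (j - k))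
        + ∑ k ∈ G, (ε k ^ 2 / 2) * ∑ j ∈ G, Q (j - k) := by
        have expand : ∀ j k : ℤ, ((ε j ^ 2 + ε k ^ 2) / 2) * Q (j - k)
            = (ε j ^ 2 / 2) * Q (j - k) + (ε k ^ 2 / 2) * Q (j - k) := fun j k => by ring
        simp only [expand, Finset.sum_add_distrib]
        congr 1
        · exact Finset.sum_congr rfl fun j _ => (Finset.mul_sum _ _ _).symm
        · rw [Finset.sum_comm]
          exact Finset.sum_congr rfl fun k _ => (Finset.mul_sum _ _ _).symm
    _ ≤ (∑ j ∈ G, (ε j ^ 2 / 2) * (3 * S0)) + ∑ k ∈ G, (ε k ^ 2 / 2) * (3 * S0) := by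
        gcongr with j hj k hk
        · exact row_bound G j
        · exact hrow' k
    _ = 3 * S0 * ∑ j ∈ G, ε j ^ 2 := by
        rw [Finset.mul_sum, ← Finset.sum_add_distrib]
        exact Finset.sum_congr rfl fun j _ => by ring
    _ = 3 * S0 * ∑' j : ℤ, ε j ^ 2 := by
        rw [tsum_eq_sum (fun j hj => by rw [hε j hj]; ring)]

end DHT

open DHT Filter Topology in
/-- Boundedness of the discrete Hilbert transform on `ℓ²(ℤ)`: there is `C > 0` such that
for every `ε ∈ ℓ²(ℤ)` the series `hₙ = Σ_{j≠n} εⱼ/(j−n)` converges absolutely for each `n`,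
and `Σₙ hₙ² ≤ C·Σⱼ εⱼ²`. -/
theorem stmt13 :
    ∃ C : ℝ, 0 < C ∧ ∀ ε : ℤ → ℝ, Summable (fun j : ℤ => ε j ^ 2) →
      (∀ n : ℤ, Summable fun j : ℤ =>
        |if j = n then 0 else ε j / ((j - n : ℤ) : ℝ)|) ∧
      Summable (fun n : ℤ =>
        (∑' j : ℤ, if j = n then 0 else ε j / ((j - n : ℤ) : ℝ)) ^ 2) ∧
      ∑' n : ℤ, (∑' j : ℤ, if j = n then 0 else ε j / ((j - n : ℤ) : ℝ)) ^ 2 ≤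
        C * ∑' j : ℤ, ε j ^ 2 := by
  refine ⟨3 * S0 + 1, by linarith [S0_nonneg], ?_⟩
  intro ε hsum
  have hiff : ∀ n j : ℤ,
      (if j = n then 0 else ε j / ((j - n : ℤ) : ℝ)) = ε j * K (j - n) := by
    intro n j
    rcases eq_or_ne j n with h | h
    · subst h
      simp [K]
    · rw [if_neg h, div_eq_mul_inv]
      rfl
  have habs : ∀ n : ℤ, Summable fun j : ℤ => |ε j * K (j - n)| := by
    intro n
    apply Summable.of_nonneg_of_le (fun j => abs_nonneg _)
      (fun j => abs_mul_le_half (ε j) (K (j - n)))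
    exact (hsum.add (K_shift_summable n)).div_const 2
  have hsummable_j : ∀ n : ℤ, Summable fun j : ℤ => ε j * K (j - n) :=
    fun n => (habs n).of_abs
  have hrw : ∀ n : ℤ, (∑' j : ℤ, if j = n then 0 else ε j / ((j - n : ℤ) : ℝ))
      = ∑' j : ℤ, ε j * K (j - n) := fun n => tsum_congr fun j => hiff n j
  have key : ∀ F : Finset ℤ, ∑ n ∈ F, (∑' j : ℤ, ε j * K (j - n)) ^ 2
      ≤ 3 * S0 * ∑' j : ℤ, ε j ^ 2 := by
    intro F
    have hG : ∀ G : Finset ℤ, ∑ n ∈ F, (∑ j ∈ G, ε j * K (j - n)) ^ 2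
        ≤ 3 * S0 * ∑' j : ℤ, ε j ^ 2 := by
      intro G
      set εG : ℤ → ℝ := fun j => if j ∈ G then ε j else 0 with hεG
      have hsupp : ∀ j ∉ G, εG j = 0 := fun j hj => if_neg hj
      obtain ⟨hsumG, hboundG⟩ := main_fin G εG hsupp
      have heq : ∀ n : ℤ, ∑ j ∈ G, ε j * K (j - n) = ∑' j : ℤ, εG j * K (j - n) := by
        intro n
        rw [tsum_eq_sum (s := G) (fun j hj => by rw [hsupp j hj, zero_mul])]
        refine Finset.sum_congr rfl fun j hj => ?_
        rw [hεG]
        simp [if_pos hj]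
      have hεG_sq_summable : Summable fun j : ℤ => εG j ^ 2 := by
        apply Summable.of_nonneg_of_le (fun j => sq_nonneg _) ?_ hsum
        intro j
        rw [hεG]
        dsimp only
        split
        · exact le_refl _
        · simpa using sq_nonneg (ε j)
      calc ∑ n ∈ F, (∑ j ∈ G, ε j * K (j - n)) ^ 2
          = ∑ n ∈ F, (∑' j : ℤ, εG j * K (j - n)) ^ 2 :=
            Finset.sum_congr rfl fun n _ => by rw [heq]
        _ ≤ ∑' n : ℤ, (∑' j : ℤ, εG j * K (j - n)) ^ 2 :=
            Summable.sum_le_tsum F (fun n _ => sq_nonneg _) hsumG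
        _ ≤ 3 * S0 * ∑' j : ℤ, εG j ^ 2 := hboundG
        _ ≤ 3 * S0 * ∑' j : ℤ, ε j ^ 2 := by
            apply mul_le_mul_of_nonneg_left ?_ (by linarith [S0_nonneg])
            apply Summable.tsum_le_tsum ?_ hεG_sq_summable hsum
            intro j
            rw [hεG]
            dsimp only
            split
            · exact le_refl _
            · simpa using sq_nonneg (ε j)
    have ht : Tendsto (fun G : Finset ℤ => ∑ n ∈ F, (∑ j ∈ G, ε j * K (j - n)) ^ 2) atTop
        (𝓝 (∑ n ∈ F, (∑' j : ℤ, ε j * K (j - n)) ^ 2)) :=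
      tendsto_finset_sum F fun n _ => ((hsummable_j n).hasSum.pow 2)
    exact le_of_tendsto ht (Eventually.of_forall hG)
  have hsummable2 : Summable fun n : ℤ => (∑' j : ℤ, ε j * K (j - n)) ^ 2 :=
    summable_of_sum_le (fun n => sq_nonneg _) key
  refine ⟨?_, ?_, ?_⟩
  · intro n
    exact (habs n).congr fun j => by rw [hiff n j]
  · apply Summable.congr hsummable2
    intro n
    rw [hrw n]
  · have h1 : ∑' n : ℤ, (∑' j : ℤ, if j = n then 0 else ε j / ((j - n : ℤ) : ℝ)) ^ 2
        = ∑' n : ℤ, (∑' j : ℤ, ε j * K (j - n)) ^ 2 := tsum_congr fun n => by rw [hrw n]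
    rw [h1]
    have h2 : ∑' n : ℤ, (∑' j : ℤ, ε j * K (j - n)) ^ 2 ≤ 3 * S0 * ∑' j : ℤ, ε j ^ 2 :=
      Summable.tsum_le_of_sum_le hsummable2 key
    have h3 : 0 ≤ ∑' j : ℤ, ε j ^ 2 := tsum_nonneg fun j => sq_nonneg _
    nlinarith [S0_nonneg]
end
end

section
/- For every real sequence ε = (εⱼ)_{j∈ℤ} ∈ ℓ²(ℤ), the double series Σ_{n∈ℤ} Σ_{j∈ℤ, j≠n} (εⱼ − εₙ)²/(j−n)² converges (is finite). -/
noncomputable section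

lemma aux14 (ε : ℤ → ℝ) (hε : Summable fun j : ℤ => ε j ^ 2) :
    Summable fun p : ℤ × ℤ => ε p.1 ^ 2 / ((p.1 - p.2 : ℤ) : ℝ) ^ 2 := by
  have hk : Summable fun k : ℤ => 1 / (k : ℝ) ^ 2 :=
    Real.summable_one_div_int_pow.mpr one_lt_two
  have hmul := hε.mul_of_nonneg hk (fun j => sq_nonneg _) (fun k => by positivity)
  let e : ℤ × ℤ ≃ ℤ × ℤ :=
    ⟨fun p => (p.1, p.1 - p.2), fun p => (p.1, p.1 - p.2),
      fun p => by simp, fun p => by simp⟩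
  rw [← Equiv.summable_iff e]
  convert hmul using 1
  funext p
  show ε p.1 ^ 2 / ((p.1 - (p.1 - p.2) : ℤ) : ℝ) ^ 2 = ε p.1 ^ 2 * (1 / (p.2 : ℝ) ^ 2)
  push_cast
  ring

/-- For every `ε ∈ ℓ²(ℤ)`, the double series `Σₙ Σ_{j≠n} (εⱼ − εₙ)²/(j−n)²` is finite. -/
theorem stmt14 (ε : ℤ → ℝ) (hε : Summable fun j : ℤ => ε j ^ 2) :
    Summable (fun p : ℤ × ℤ =>
      if p.1 = p.2 then 0 else (ε p.1 - ε p.2) ^ 2 / ((p.1 - p.2 : ℤ) : ℝ) ^ 2) := by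
  have h1 := aux14 ε hε
  have h2 : Summable fun p : ℤ × ℤ => ε p.2 ^ 2 / ((p.1 - p.2 : ℤ) : ℝ) ^ 2 := by
    have := (Equiv.prodComm ℤ ℤ).summable_iff.mpr h1
    convert this using 1
    funext p
    show ε p.2 ^ 2 / ((p.1 - p.2 : ℤ) : ℝ) ^ 2
        = ε p.2 ^ 2 / ((p.2 - p.1 : ℤ) : ℝ) ^ 2
    push_cast
    ring_nf
  have hsum : Summable fun p : ℤ × ℤ =>
      2 * (ε p.1 ^ 2 / ((p.1 - p.2 : ℤ) : ℝ) ^ 2)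
        + 2 * (ε p.2 ^ 2 / ((p.1 - p.2 : ℤ) : ℝ) ^ 2) :=
    ((h1.mul_left 2).add (h2.mul_left 2))
  apply Summable.of_nonneg_of_le _ _ hsum
  · intro p
    split_ifs
    · exact le_refl 0
    · positivity
  · intro p
    split_ifs with h
    · positivity
    · have hd : (0 : ℝ) < ((p.1 - p.2 : ℤ) : ℝ) ^ 2 := by
        have : (p.1 - p.2 : ℤ) ≠ 0 := sub_ne_zero.mpr h
        positivity
      rw [← mul_div_assoc, ← mul_div_assoc, ← add_div]
      gcongr
      nlinarith [sq_nonneg (ε p.1 + ε p.2)]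
end
end

section
/- Let v = (v₁,v₂) : [0,1] → ℝ², τ ∈ ℝ, and let φ = (φ₁,φ₂) : [0,1] → ℝ² be differentiable with J·φ'(x) + V(x)·φ(x) = τ·φ(x) for all x ∈ [0,1], φ₁(0) = 0 and φ₂(1) = 0 (a mixed-boundary-condition eigenfunction). Define the even-odd extension of the potential on [0,2] by Ṽ(x) = V(x) for x ∈ [0,1] and Ṽ(x) = J₁·V(2−x)·J₁ for x ∈ (1,2], and define g : [0,2] → ℝ² by g(x) = φ(x) for x ∈ [0,1] and g(x) = J₁·φ(2−x) for x ∈ [1,2]. Then g is continuous at x = 1 (the two definitions agree there), g is differentiable on (1,2) with J·g'(x) + Ṽ(x)·g(x) = τ·g(x) there, and g₁(0) = g₁(2) = 0; i.e., the mixed eigenvalue τ becomes a Dirichlet eigenvalue on [0,2] for the extended potential. -/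
open Set Matrix

noncomputable section

/-- The real matrix `J = [[0,1],[-1,0]]`. -/
def JR : Matrix (Fin 2) (Fin 2) ℝ := !![0, 1; -1, 0]

/-- The real matrix `J₁ = [[1,0],[0,-1]]`. -/
def J1R : Matrix (Fin 2) (Fin 2) ℝ := !![1, 0; 0, -1]

/-- The Zakharov–Shabat potential matrix `V(x) = [[v₁(x), v₂(x)],[v₂(x), -v₁(x)]]`
of a real vector function `v = (v₁, v₂)`. -/
def ZSR (v : ℝ → ℝ × ℝ) (x : ℝ) : Matrix (Fin 2) (Fin 2) ℝ :=
  !![(v x).1, (v x).2; (v x).2, -(v x).1]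

/-- If `φ` is a mixed-boundary-condition eigenfunction of `J·φ' + V·φ = τ·φ` on `[0,1]`
(`φ₁(0) = φ₂(1) = 0`), then its reflection `g` (with `g(x) = J₁·φ(2−x)` on `[1,2]`) is
continuous at `x = 1`, satisfies `J·g' + Ṽ·g = τ·g` on `(1,2)` for the even-odd extension
`Ṽ` of the potential, and `g₁(0) = g₁(2) = 0`: the mixed eigenvalue `τ` becomes a Dirichlet
eigenvalue on `[0,2]` for `Ṽ`. -/
theorem stmt17 (v : ℝ → ℝ × ℝ) (τ : ℝ) (φ φ' : ℝ → Fin 2 → ℝ)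
    (hderiv : ∀ x ∈ Icc (0 : ℝ) 1, HasDerivWithinAt φ (φ' x) (Icc 0 1) x)
    (hode : ∀ x ∈ Icc (0 : ℝ) 1,
      JR.mulVec (φ' x) + (ZSR v x).mulVec (φ x) = τ • φ x)
    (hbc0 : φ 0 0 = 0) (hbc1 : φ 1 1 = 0)
    (W : ℝ → Matrix (Fin 2) (Fin 2) ℝ)
    (hW : ∀ x : ℝ, W x = if x ≤ 1 then ZSR v x else J1R * ZSR v (2 - x) * J1R)
    (g : ℝ → Fin 2 → ℝ)
    (hg : ∀ x : ℝ, g x = if x ≤ 1 then φ x else J1R.mulVec (φ (2 - x))) :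
    J1R.mulVec (φ 1) = φ 1 ∧
    ContinuousWithinAt g (Icc 0 2) 1 ∧
    (∀ x ∈ Ioo (1 : ℝ) 2,
      HasDerivAt g (-(J1R.mulVec (φ' (2 - x)))) x ∧
      JR.mulVec (-(J1R.mulVec (φ' (2 - x)))) + (W x).mulVec (g x) = τ • g x) ∧
    g 0 0 = 0 ∧ g 2 0 = 0 := by
  have hcont : ∀ x ∈ Icc (0:ℝ) 1, ContinuousWithinAt φ (Icc 0 1) x :=
    fun x hx => (hderiv x hx).continuousWithinAt
  have h1 : J1R.mulVec (φ 1) = φ 1 := by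
    funext i
    fin_cases i <;>
      simp [J1R, Matrix.mulVec, dotProduct, Fin.sum_univ_two, hbc1]
  refine ⟨h1, ?_, ?_, ?_, ?_⟩
  · -- continuity at 1
    have hsub : Icc (0:ℝ) 2 ⊆ Icc 0 1 ∪ Icc 1 2 := by
      intro x hx
      rcases le_total x 1 with h | h
      · exact Or.inl ⟨hx.1, h⟩
      · exact Or.inr ⟨h, hx.2⟩
    have hA : ContinuousWithinAt g (Icc 0 1) 1 := by
      apply (hcont 1 (by norm_num)).congr
      · intro y hy; rw [hg]; simp [hy.2]
      · rw [hg]; simp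
    have hB : ContinuousWithinAt g (Icc 1 2) 1 := by
      have L := LinearMap.toContinuousLinearMap (Matrix.mulVecLin J1R)
      have h2 : ContinuousWithinAt (fun x : ℝ => (2:ℝ) - x) (Icc 1 2) 1 :=
        (continuous_const.sub continuous_id).continuousWithinAt
      have hmaps : MapsTo (fun x : ℝ => 2 - x) (Icc 1 2) (Icc 0 1) := by
        intro y hy; simp only [mem_Icc]; constructor <;> linarith [hy.1, hy.2]
      have hφ1 : ContinuousWithinAt φ (Icc 0 1) ((fun x : ℝ => 2 - x) 1) := by
        rw [show (fun x : ℝ => 2 - x) 1 = 1 from by norm_num]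
        exact hcont 1 (by norm_num)
      have hφc : ContinuousWithinAt (fun x : ℝ => φ (2 - x)) (Icc 1 2) 1 :=
        hφ1.comp h2 hmaps
      have hc : ContinuousWithinAt (fun x : ℝ => J1R.mulVec (φ (2 - x))) (Icc 1 2) 1 := by
        have hL : Continuous fun w : Fin 2 → ℝ => J1R.mulVec w :=
          (LinearMap.toContinuousLinearMap (Matrix.mulVecLin J1R)).continuous
        exact hL.continuousAt.comp_continuousWithinAt hφc
      apply hc.congr
      · intro y hy
        rw [hg]
        by_cases h : y ≤ 1
        · have : y = 1 := le_antisymm h hy.1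
          subst this
          norm_num [h1]
        · simp [h]
      · rw [hg]
        norm_num [h1]
    exact (hA.union hB).mono hsub
  · intro x hx
    set y : ℝ := 2 - x with hy
    have hyI : y ∈ Ioo (0:ℝ) 1 := ⟨by simp [hy]; linarith [hx.2], by simp [hy]; linarith [hx.1]⟩
    have hymem : y ∈ Icc (0:ℝ) 1 := ⟨hyI.1.le, hyI.2.le⟩
    have hnhds : Icc (0:ℝ) 1 ∈ nhds y := Icc_mem_nhds hyI.1 hyI.2
    have hφd : HasDerivAt φ (φ' y) y := (hderiv y hymem).hasDerivAt hnhds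
    have hsub : HasDerivAt (fun t : ℝ => (2:ℝ) - t) (-1) x := by
      simpa using (hasDerivAt_id x).const_sub 2
    have hcomp : HasDerivAt (fun t : ℝ => φ (2 - t)) (-(φ' y)) x := by
      have := hφd.scomp x hsub
      simpa [Function.comp_def] using this
    have L := LinearMap.toContinuousLinearMap (Matrix.mulVecLin J1R)
    have hLd : HasDerivAt (fun t : ℝ =>
        (LinearMap.toContinuousLinearMap (Matrix.mulVecLin J1R)) (φ (2 - t)))
        ((LinearMap.toContinuousLinearMap (Matrix.mulVecLin J1R)) (-(φ' y))) x :=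
      (LinearMap.toContinuousLinearMap (Matrix.mulVecLin J1R)).hasFDerivAt.comp_hasDerivAt x hcomp
    have hgd : HasDerivAt g (-(J1R.mulVec (φ' y))) x := by
      have heq : ∀ᶠ t in nhds x, g t =
          (LinearMap.toContinuousLinearMap (Matrix.mulVecLin J1R)) (φ (2 - t)) := by
        have : Ioo (1:ℝ) 2 ∈ nhds x := isOpen_Ioo.mem_nhds hx
        filter_upwards [this] with t ht
        rw [hg]
        simp [not_le.mpr ht.1]
      have := hLd.congr_of_eventuallyEq heq
      simpa [Matrix.mulVec_neg] using this
    refine ⟨hgd, ?_⟩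
    have hode2 := hode y hymem
    have e0 := congrFun hode2 0
    have e1 := congrFun hode2 1
    simp [JR, ZSR, Matrix.mulVec, dotProduct, Fin.sum_univ_two] at e0 e1
    have hgx : g x = J1R.mulVec (φ y) := by rw [hg]; simp [not_le.mpr hx.1, hy]
    have hWx : W x = J1R * ZSR v y * J1R := by rw [hW]; simp [not_le.mpr hx.1, hy]
    funext i
    fin_cases i <;>
      · simp [hgx, hWx, JR, J1R, ZSR, Matrix.mulVec, dotProduct,
          Matrix.mul_apply, Fin.sum_univ_two]
        linarith
  · rw [hg]; simp [hbc0]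
  · rw [hg]
    norm_num [J1R, Matrix.mulVec, dotProduct, Fin.sum_univ_two, hbc0]
end
end
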